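/- Let G be a torsion-free group in which the centralizer of every nontrivial element is infinite cyclic, and let H ≤ G be a retract of G. Then H is malnormal in G: for every g ∈ G \ H, H ∩ gHg^{-1} = {1}. -/

import Mathlib

/-- A monoid is torsion-free if no nontrivial element has finite order. -/
def Monoid.IsTorsionFree (G : Type*) [Monoid G] : Prop :=
  ∀ g : G, g ≠ 1 → ¬IsOfFinOrder g

/-- Let `G` be a torsion-free group in which the centralizer of every nontrivial
element is infinite cyclic, and let `H ≤ G` be a retract of `G`. Then `H` is
malnormal in `G`: for every `g ∉ H`, the intersection `H ∩ gHg⁻¹` is trivial. -/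
theorem retract_malnormal {G : Type*} [Group G]
    (htf : Monoid.IsTorsionFree G)
    (hcent : ∀ g : G, g ≠ 1 → Nonempty (Subgroup.centralizer {g} ≃* Multiplicative ℤ))
    (H : Subgroup G) (φ : G →* G) (hrange : φ.range = H)
    (hfix : ∀ h ∈ H, φ h = h) :
    ∀ g : G, g ∉ H → ∀ x : G, x ∈ H → (∃ h ∈ H, x = g * h * g⁻¹) → x = 1 := by
  intro g hg x hx ⟨h, hh, hxh⟩
  by_contra hx1
  -- h ≠ 1
  have hh1 : h ≠ 1 := by
    rintro rfl
    simp at hxh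
    exact hx1 hxh
  -- φ fixes x and h
  have hφh : φ h = h := hfix h hh
  have hφx : φ x = x := hfix x hx
  -- c := (φ g)⁻¹ * g commutes with h
  set c : G := (φ g)⁻¹ * g with hc
  have hconj : φ g * h * (φ g)⁻¹ = g * h * g⁻¹ := by
    have := hφx
    rw [hxh] at this
    simpa [hφh] using this
  have hcomm : h * c = c * h := by
    have h2 : h * (φ g)⁻¹ = (φ g)⁻¹ * (g * h * g⁻¹) := by
      rw [← hconj]; group
    rw [hc]
    calc h * ((φ g)⁻¹ * g) = (h * (φ g)⁻¹) * g := by group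
      _ = (φ g)⁻¹ * (g * h * g⁻¹) * g := by rw [h2]
      _ = ((φ g)⁻¹ * g) * h := by group
  -- c lies in the centralizer of {h}
  have hcC : c ∈ Subgroup.centralizer ({h} : Set G) := by
    rw [Subgroup.mem_centralizer_iff]
    rintro y rfl
    exact hcomm
  have hhC : h ∈ Subgroup.centralizer ({h} : Set G) := by
    rw [Subgroup.mem_centralizer_iff]
    rintro y rfl
    rfl
  -- φ c = 1
  have hφg : φ (φ g) = φ g := hfix (φ g) (hrange ▸ ⟨g, rfl⟩)
  have hφc : φ c = 1 := by
    rw [hc, map_mul, map_inv, hφg]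
    group
  obtain ⟨e⟩ := hcent h hh1
  set a : Multiplicative ℤ := e ⟨c, hcC⟩ with ha
  set k : Multiplicative ℤ := e ⟨h, hhC⟩ with hk
  set m : ℤ := Multiplicative.toAdd a with hm
  set n : ℤ := Multiplicative.toAdd k with hn
  have hn0 : n ≠ 0 := by
    intro h0
    have : k = 1 := by
      have : Multiplicative.toAdd k = Multiplicative.toAdd (1 : Multiplicative ℤ) := by
        rw [toAdd_one]; exact h0
      exact Multiplicative.toAdd.injective this
    rw [hk] at this
    have := e.injective (this.trans (map_one e).symm)
    exact hh1 (Subtype.ext_iff.mp this)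
  -- c ^ n = h ^ m in G
  have key : c ^ n = h ^ m := by
    have : (⟨c, hcC⟩ : Subgroup.centralizer ({h} : Set G)) ^ n = (⟨h, hhC⟩) ^ m := by
      apply e.injective
      rw [map_zpow, map_zpow, ← ha, ← hk]
      apply Multiplicative.toAdd.injective
      rw [toAdd_zpow, toAdd_zpow, ← hm, ← hn]
      simp [smul_eq_mul, mul_comm]
    have := congrArg (Subtype.val) this
    simpa using this
  -- apply φ
  have hhm : h ^ m = 1 := by
    have := congrArg φ key
    rw [map_zpow, map_zpow, hφc, hφh, one_zpow] at this
    exact this.symm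
  have hm0 : m = 0 := by
    by_contra hm0
    exact htf h hh1 (isOfFinOrder_iff_zpow_eq_one.mpr ⟨m, hm0, hhm⟩)
  -- hence c = 1, so g = φ g ∈ H
  have hcn : c ^ n = 1 := by rw [key, hm0, zpow_zero]
  have hc1 : c = 1 := by
    by_contra hc1
    exact htf c hc1 (isOfFinOrder_iff_zpow_eq_one.mpr ⟨n, hn0, hcn⟩)
  have : g = φ g := by
    have h1 : (φ g)⁻¹ * g = 1 := hc1
    have := congrArg (fun y => φ g * y) h1
    simpa using this
  exact hg (this ▸ hrange ▸ ⟨g, rfl⟩)
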